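/- Let n ≥ 1, m > 0 and 0 < θ ≤ 1 with n − 2θ > 0. Then there exist a positive constant C depending on n, m, θ and a time t₀ > 0 such that for all t ≥ t₀ and all P₁ ∈ ℝ, ∫_{ℝⁿ} |φ(t,ξ)|² dξ ≥ C P₁² t^{-(n−2θ)/2}. -/

import Mathlib

open MeasureTheory Real

noncomputable section

/-- Euclidean space `ℝⁿ`. -/
abbrev E (n : ℕ) := EuclideanSpace ℝ (Fin n)

/-- The asymptotic profile `φ(t,ξ)`, as a function of `r = |ξ|`. -/
def phi (m θ P₁ t r : ℝ) : ℝ :=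
  P₁ * Real.exp (-(r ^ 2) * t / 2) *
    Real.sin (t * Real.sqrt (r ^ 2 + m ^ 2 * Real.log (1 + r ^ (2 * θ)))) /
    Real.sqrt (r ^ 2 + m ^ 2 * Real.log (1 + r ^ (2 * θ)))

namespace Stmt15Aux

/-- The quantity under the square root. -/
def D (m θ r : ℝ) : ℝ := r ^ 2 + m ^ 2 * Real.log (1 + r ^ (2 * θ))

/-- Derivative of `D` in `r` (for `r > 0`). -/
def D' (m θ r : ℝ) : ℝ := 2 * r + m ^ 2 * (2 * θ * r ^ (2 * θ - 1) / (1 + r ^ (2 * θ)))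

/-- The phase. -/
def g (m θ t r : ℝ) : ℝ := t * Real.sqrt (D m θ r)

/-- Derivative of the phase in `r` (for `r > 0`). -/
def g' (m θ t r : ℝ) : ℝ := t * (D' m θ r * (1 / (2 * Real.sqrt (D m θ r))))

variable {m θ t r : ℝ}

lemma rpow_pos (hr : 0 < r) (p : ℝ) : 0 < r ^ p := Real.rpow_pos_of_pos hr p

lemma one_add_rpow_pos (hr : 0 < r) (p : ℝ) : 0 < 1 + r ^ p := by
  have := rpow_pos hr p; linarith

lemma log_one_add_nonneg (hr : 0 < r) (p : ℝ) : 0 ≤ Real.log (1 + r ^ p) := by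
  have := rpow_pos hr p
  exact Real.log_nonneg (by linarith)

lemma D_nonneg (hr : 0 < r) : 0 ≤ D m θ r := by
  have h2 := log_one_add_nonneg hr (2 * θ)
  have : 0 ≤ m ^ 2 * Real.log (1 + r ^ (2 * θ)) := by positivity
  unfold D; nlinarith [sq_nonneg r]

lemma D_pos (hm : 0 < m) (hr : 0 < r) : 0 < D m θ r := by
  have h1 : 0 < r ^ 2 := by positivity
  have h2 := log_one_add_nonneg hr (2 * θ)
  have : 0 ≤ m ^ 2 * Real.log (1 + r ^ (2 * θ)) := by positivity
  unfold D; linarith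

lemma sq_le_rpow (hθ2 : θ ≤ 1) (hr : 0 < r) (hr1 : r ≤ 1) : r ^ 2 ≤ r ^ (2 * θ) := by
  rw [show (r : ℝ) ^ 2 = r ^ ((2 : ℕ) : ℝ) from (Real.rpow_natCast r 2).symm]
  exact Real.rpow_le_rpow_of_exponent_ge hr hr1 (by push_cast; linarith)

lemma D_le (hθ2 : θ ≤ 1) (hr : 0 < r) (hr1 : r ≤ 1) :
    D m θ r ≤ (1 + m ^ 2) * r ^ (2 * θ) := by
  have h1 : r ^ 2 ≤ r ^ (2 * θ) := sq_le_rpow hθ2 hr hr1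
  have h2 : Real.log (1 + r ^ (2 * θ)) ≤ r ^ (2 * θ) := by
    have := Real.log_le_sub_one_of_pos (one_add_rpow_pos hr (2 * θ))
    linarith
  have h3 : 0 ≤ m ^ 2 := sq_nonneg m
  unfold D; nlinarith [rpow_pos hr (2 * θ)]

lemma log_one_add_ge (x : ℝ) (hx : 0 ≤ x) (hx1 : x ≤ 1) : x / 2 ≤ Real.log (1 + x) := by
  have hpos : (0 : ℝ) < 1 + x := by linarith
  have h := Real.log_le_sub_one_of_pos (show (0:ℝ) < (1 + x)⁻¹ by positivity)
  rw [Real.log_inv] at h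
  have : x / (1 + x) ≤ Real.log (1 + x) := by
    have h2 : (1 + x)⁻¹ - 1 = -(x / (1 + x)) := by field_simp; ring
    linarith [h.trans_eq h2]
  have h3 : x / 2 ≤ x / (1 + x) := by
    apply div_le_div_of_nonneg_left hx (by linarith) (by linarith)
  linarith

lemma le_D (hm : 0 < m) (hθ1 : 0 < θ) (hr : 0 < r) (hr1 : r ≤ 1) :
    m ^ 2 / 2 * r ^ (2 * θ) ≤ D m θ r := by
  have hx : 0 ≤ r ^ (2 * θ) := (rpow_pos hr _).le
  have hx1 : r ^ (2 * θ) ≤ 1 := Real.rpow_le_one hr.le hr1 (by linarith)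
  have h := log_one_add_ge (r ^ (2 * θ)) hx hx1
  have h2 : 0 ≤ r ^ 2 := sq_nonneg r
  unfold D; nlinarith [sq_nonneg m]

lemma hasDerivAt_D (hr : 0 < r) : HasDerivAt (fun s => D m θ s) (D' m θ r) r := by
  have h1 : HasDerivAt (fun s : ℝ => s ^ (2 * θ)) (2 * θ * r ^ (2 * θ - 1)) r :=
    Real.hasDerivAt_rpow_const (Or.inl hr.ne')
  have h2 : HasDerivAt (fun s : ℝ => 1 + s ^ (2 * θ)) (2 * θ * r ^ (2 * θ - 1)) r := by
    exact h1.const_add 1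
  have h3 : HasDerivAt (fun s : ℝ => Real.log (1 + s ^ (2 * θ)))
      ((1 + r ^ (2 * θ))⁻¹ * (2 * θ * r ^ (2 * θ - 1))) r :=
    (Real.hasDerivAt_log (one_add_rpow_pos hr (2 * θ)).ne').comp (h₂ := Real.log) r h2
  have h4 := (hasDerivAt_pow 2 r).add (h3.const_mul (m ^ 2))
  refine h4.congr_deriv ?_
  unfold D'
  have hne := (one_add_rpow_pos hr (2 * θ)).ne'
  push_cast
  field_simp

lemma hasDerivAt_g (hm : 0 < m) (hr : 0 < r) :
    HasDerivAt (g m θ t) (g' m θ t r) r := by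
  have hD := hasDerivAt_D (m := m) (θ := θ) hr
  have hs : HasDerivAt Real.sqrt (1 / (2 * Real.sqrt (D m θ r))) (D m θ r) :=
    Real.hasDerivAt_sqrt (D_pos hm hr).ne'
  have h := (hs.comp r hD).const_mul t
  have heq : (fun s => t * Real.sqrt (D m θ s)) = g m θ t := rfl
  refine h.congr_deriv ?_
  unfold g'; ring

lemma D'_nonneg (hθ1 : 0 < θ) (hr : 0 < r) : 0 ≤ D' m θ r := by
  have h1 := (rpow_pos hr (2 * θ - 1)).le
  have h2 := (one_add_rpow_pos hr (2 * θ)).le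
  have h3 : 0 ≤ 2 * θ * r ^ (2 * θ - 1) / (1 + r ^ (2 * θ)) := by
    apply div_nonneg _ h2; nlinarith
  unfold D'
  nlinarith [sq_nonneg m]

lemma D'_le (hθ1 : 0 < θ) (hθ2 : θ ≤ 1) (hr : 0 < r) (hr1 : r ≤ 1) :
    D' m θ r ≤ 2 * (1 + m ^ 2 * θ) * r ^ (2 * θ - 1) := by
  have h1 : r ^ (1 : ℝ) ≤ r ^ (2 * θ - 1) :=
    Real.rpow_le_rpow_of_exponent_ge hr hr1 (by linarith)
  rw [Real.rpow_one] at h1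
  have hnum : 0 ≤ 2 * θ * r ^ (2 * θ - 1) := by
    have := (rpow_pos hr (2 * θ - 1)).le; nlinarith
  have h2 : 2 * θ * r ^ (2 * θ - 1) / (1 + r ^ (2 * θ)) ≤ 2 * θ * r ^ (2 * θ - 1) := by
    apply div_le_self hnum
    have := (rpow_pos hr (2 * θ)).le; linarith
  unfold D'
  nlinarith [sq_nonneg m, rpow_pos hr (2 * θ - 1)]

lemma rpow_sq (hr : 0 < r) (p : ℝ) : (r ^ p) ^ 2 = r ^ (2 * p) := by
  rw [← Real.rpow_natCast (r ^ p) 2, ← Real.rpow_mul hr.le]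
  congr 1
  push_cast
  ring

lemma le_sqrt_D (hm : 0 < m) (hθ1 : 0 < θ) (hr : 0 < r) (hr1 : r ≤ 1) :
    m / 2 * r ^ θ ≤ Real.sqrt (D m θ r) := by
  have h1 := le_D (m := m) hm hθ1 hr hr1
  have h2 : (m / 2 * r ^ θ) ^ 2 ≤ D m θ r := by
    have h3 : (r ^ θ) ^ 2 = r ^ (2 * θ) := rpow_sq hr θ
    nlinarith [rpow_pos hr (2 * θ), sq_nonneg m]
  have h0 : 0 ≤ m / 2 * r ^ θ := by
    have := (rpow_pos hr θ).le; nlinarith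
  calc m / 2 * r ^ θ = Real.sqrt ((m / 2 * r ^ θ) ^ 2) := (Real.sqrt_sq h0).symm
    _ ≤ Real.sqrt (D m θ r) := Real.sqrt_le_sqrt h2

lemma sqrt_D_le (hm : 0 < m) (hθ1 : 0 < θ) (hθ2 : θ ≤ 1) (hr : 0 < r) (hr1 : r ≤ 1) :
    Real.sqrt (D m θ r) ≤ Real.sqrt (1 + m ^ 2) * r ^ θ := by
  have h1 := D_le (m := m) hθ2 hr hr1
  have h2 : Real.sqrt ((1 + m ^ 2) * r ^ (2 * θ)) = Real.sqrt (1 + m ^ 2) * r ^ θ := by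
    rw [Real.sqrt_mul (by positivity), ← rpow_sq hr θ, Real.sqrt_sq (rpow_pos hr θ).le]
  calc Real.sqrt (D m θ r) ≤ Real.sqrt ((1 + m ^ 2) * r ^ (2 * θ)) := Real.sqrt_le_sqrt h1
    _ = Real.sqrt (1 + m ^ 2) * r ^ θ := h2

lemma g'_nonneg (ht : 0 ≤ t) (hθ1 : 0 < θ) (hr : 0 < r) : 0 ≤ g' m θ t r := by
  have h1 := D'_nonneg (m := m) hθ1 hr
  have h2 := Real.sqrt_nonneg (D m θ r)
  unfold g'
  have h3 : 0 ≤ 1 / (2 * Real.sqrt (D m θ r)) := by positivity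
  exact mul_nonneg ht (mul_nonneg h1 h3)

lemma g'_le (hm : 0 < m) (hθ1 : 0 < θ) (hθ2 : θ ≤ 1) (ht : 0 ≤ t) (hr : 0 < r) (hr1 : r ≤ 1) :
    g' m θ t r ≤ t * (2 * (1 + m ^ 2 * θ) / m) * r ^ (θ - 1) := by
  have hD' := D'_le (m := m) hθ1 hθ2 hr hr1
  have hs := le_sqrt_D hm hθ1 hr hr1
  have hrθ := rpow_pos hr θ
  have hrθ1 := rpow_pos hr (θ - 1)
  have hr2θ1 := rpow_pos hr (2 * θ - 1)
  have hspos : 0 < Real.sqrt (D m θ r) := lt_of_lt_of_le (by nlinarith) hs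
  have hinv : 1 / (2 * Real.sqrt (D m θ r)) ≤ 1 / (m * r ^ θ) := by
    apply one_div_le_one_div_of_le (by nlinarith)
    nlinarith
  have hkey : D' m θ r * (1 / (2 * Real.sqrt (D m θ r))) ≤
      2 * (1 + m ^ 2 * θ) * r ^ (2 * θ - 1) * (1 / (m * r ^ θ)) := by
    have hmθ : 0 ≤ m ^ 2 * θ := by positivity
    apply mul_le_mul hD' hinv (by positivity) (by nlinarith)
  have heq : 2 * (1 + m ^ 2 * θ) * r ^ (2 * θ - 1) * (1 / (m * r ^ θ)) =
      2 * (1 + m ^ 2 * θ) / m * r ^ (θ - 1) := by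
    have h5 : r ^ (θ - 1) = r ^ (2 * θ - 1) / r ^ θ := by
      rw [← Real.rpow_sub hr]; congr 1; ring
    rw [h5]
    field_simp
  rw [heq] at hkey
  unfold g'
  calc t * (D' m θ r * (1 / (2 * Real.sqrt (D m θ r)))) ≤
      t * (2 * (1 + m ^ 2 * θ) / m * r ^ (θ - 1)) := by
        apply mul_le_mul_of_nonneg_left hkey ht
    _ = t * (2 * (1 + m ^ 2 * θ) / m) * r ^ (θ - 1) := by ring

lemma two_rpow_ge (hθ1 : 0 < θ) (hθ2 : θ ≤ 1) : 1 + θ ≤ (2 : ℝ) ^ (2 * θ) := by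
  have h1 : (2 : ℝ) ^ (2 * θ) = Real.exp (2 * θ * Real.log 2) := by
    rw [Real.rpow_def_of_pos (by norm_num)]; ring_nf
  have h2 := Real.add_one_le_exp (2 * θ * Real.log 2)
  have h3 : (0.6931471803 : ℝ) < Real.log 2 := Real.log_two_gt_d9
  rw [h1]
  nlinarith

lemma two_rpow_le (hθ2 : θ ≤ 1) : (2 : ℝ) ^ (2 * θ) ≤ 4 := by
  calc (2 : ℝ) ^ (2 * θ) ≤ (2 : ℝ) ^ (2 : ℝ) :=
        Real.rpow_le_rpow_of_exponent_le (by norm_num) (by linarith)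
    _ = 4 := by
      rw [show (2 : ℝ) = ((2 : ℕ) : ℝ) from by norm_num, Real.rpow_natCast]
      norm_num

lemma log_diff_ge {x y : ℝ} (hx : 0 ≤ x) (hxy : x ≤ y) (hy1 : y ≤ 1) :
    (y - x) / 2 ≤ Real.log (1 + y) - Real.log (1 + x) := by
  have hy : (0 : ℝ) < 1 + y := by linarith
  have hx' : (0 : ℝ) < 1 + x := by linarith
  have h := Real.log_le_sub_one_of_pos (show (0 : ℝ) < (1 + x) / (1 + y) by positivity)
  rw [Real.log_div hx'.ne' hy.ne'] at h
  have h2 : (1 + x) / (1 + y) - 1 = (x - y) / (1 + y) := by field_simp; ring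
  rw [h2] at h
  have h3 : (x - y) / (1 + y) ≤ (x - y) / 2 := by
    rw [div_le_div_iff₀ hy (by norm_num)]
    nlinarith
  have h4 : (x - y) / 2 = -((y - x) / 2) := by ring
  linarith

set_option maxHeartbeats 1000000 in
lemma g_gap (hm : 0 < m) (hθ1 : 0 < θ) (hθ2 : θ ≤ 1) (ht : 0 ≤ t) {a : ℝ}
    (ha : 0 < a) (hb1 : 2 * a ≤ 1) :
    m ^ 2 * θ / (8 * Real.sqrt (1 + m ^ 2)) * (t * a ^ θ) ≤
      g m θ t (2 * a) - g m θ t a := by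
  have hb : 0 < 2 * a := by linarith
  have ha1 : a ≤ 1 := by linarith
  have haθ := rpow_pos ha θ
  have ha2θ := rpow_pos ha (2 * θ)
  have hSnn : 0 ≤ 1 + m ^ 2 := by positivity
  have hMs : 0 < Real.sqrt (1 + m ^ 2) := Real.sqrt_pos.2 (by positivity)
  -- b ^ (2θ) = 2^(2θ) * a^(2θ)
  have hb2θ : (2 * a) ^ (2 * θ) = (2 : ℝ) ^ (2 * θ) * a ^ (2 * θ) :=
    Real.mul_rpow (by norm_num) ha.le
  have h2θ1 : (2 : ℝ) ^ (2 * θ) ≤ 4 := by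
    calc (2 : ℝ) ^ (2 * θ) ≤ (2 : ℝ) ^ (2 : ℝ) :=
          Real.rpow_le_rpow_of_exponent_le (by norm_num) (by linarith)
      _ = 4 := by rw [show (2 : ℝ) = ((2 : ℕ) : ℝ) by norm_num, Real.rpow_natCast]; norm_num
  have hyle1 : (2 * a) ^ (2 * θ) ≤ 1 := Real.rpow_le_one hb.le hb1 (by linarith)
  have hxley : a ^ (2 * θ) ≤ (2 * a) ^ (2 * θ) :=
    Real.rpow_le_rpow ha.le (by linarith) (by linarith)
  -- D difference lower bound
  have hDdiff : m ^ 2 * θ / 2 * a ^ (2 * θ) ≤ D m θ (2 * a) - D m θ a := by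
    have hlog := log_diff_ge (rpow_pos ha (2 * θ)).le hxley hyle1
    have hyx : θ * a ^ (2 * θ) ≤ (2 * a) ^ (2 * θ) - a ^ (2 * θ) := by
      rw [hb2θ]
      have := two_rpow_ge hθ1 hθ2
      nlinarith
    have hsq : a ^ 2 ≤ (2 * a) ^ 2 := by nlinarith
    unfold D
    nlinarith [sq_nonneg m, mul_le_mul_of_nonneg_left hlog (sq_nonneg m)]
  -- sqrt sum upper bound
  have hsb := sqrt_D_le hm hθ1 hθ2 hb hb1
  have hsa := sqrt_D_le hm hθ1 hθ2 ha ha1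
  have hbθ : (2 * a) ^ θ ≤ 2 * a ^ θ := by
    rw [Real.mul_rpow (by norm_num) ha.le]
    have : (2 : ℝ) ^ θ ≤ 2 := by
      calc (2 : ℝ) ^ θ ≤ (2 : ℝ) ^ (1 : ℝ) :=
            Real.rpow_le_rpow_of_exponent_le (by norm_num) hθ2
        _ = 2 := Real.rpow_one 2
    nlinarith
  have haθθ : a ^ θ ≤ 2 * a ^ θ := by nlinarith
  have hsum : Real.sqrt (D m θ (2 * a)) + Real.sqrt (D m θ a) ≤
      4 * Real.sqrt (1 + m ^ 2) * a ^ θ := by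
    have h1 : Real.sqrt (D m θ (2 * a)) ≤ Real.sqrt (1 + m ^ 2) * (2 * a ^ θ) := by
      calc Real.sqrt (D m θ (2 * a)) ≤ Real.sqrt (1 + m ^ 2) * (2 * a) ^ θ := hsb
        _ ≤ Real.sqrt (1 + m ^ 2) * (2 * a ^ θ) := by nlinarith
    have h2 : Real.sqrt (D m θ a) ≤ Real.sqrt (1 + m ^ 2) * (2 * a ^ θ) := by
      calc Real.sqrt (D m θ a) ≤ Real.sqrt (1 + m ^ 2) * a ^ θ := hsa
        _ ≤ Real.sqrt (1 + m ^ 2) * (2 * a ^ θ) := by nlinarith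
    linarith [h1, h2]
  -- difference of square roots
  have hsqb := Real.sq_sqrt (D_nonneg (m := m) (θ := θ) hb)
  have hsqa := Real.sq_sqrt (D_nonneg (m := m) (θ := θ) ha)
  have hprod : (Real.sqrt (D m θ (2 * a)) - Real.sqrt (D m θ a)) *
      (Real.sqrt (D m θ (2 * a)) + Real.sqrt (D m θ a)) = D m θ (2 * a) - D m θ a := by
    nlinarith [hsqb, hsqa]
  have hSpos : 0 < Real.sqrt (D m θ (2 * a)) + Real.sqrt (D m θ a) := by
    have h1 : 0 < Real.sqrt (D m θ (2 * a)) := Real.sqrt_pos.2 (D_pos hm hb)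
    have h2 := Real.sqrt_nonneg (D m θ a)
    linarith
  set c : ℝ := m ^ 2 * θ / (8 * Real.sqrt (1 + m ^ 2)) with hc
  have hcpos : 0 < c := by positivity
  have hkey : c * a ^ θ ≤ Real.sqrt (D m θ (2 * a)) - Real.sqrt (D m θ a) := by
    rw [← mul_le_mul_iff_of_pos_right hSpos, hprod]
    have e1 : c * a ^ θ * (4 * Real.sqrt (1 + m ^ 2) * a ^ θ) = m ^ 2 * θ / 2 * a ^ (2 * θ) := by
      rw [hc, ← rpow_sq ha θ]
      field_simp
      ring
    calc c * a ^ θ * (Real.sqrt (D m θ (2 * a)) + Real.sqrt (D m θ a)) ≤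
        c * a ^ θ * (4 * Real.sqrt (1 + m ^ 2) * a ^ θ) :=
          mul_le_mul_of_nonneg_left hsum (by positivity)
      _ = m ^ 2 * θ / 2 * a ^ (2 * θ) := e1
      _ ≤ D m θ (2 * a) - D m θ a := hDdiff
  have : c * (t * a ^ θ) = t * (c * a ^ θ) := by ring
  rw [hc] at this ⊢
  rw [this]
  unfold g
  have := mul_le_mul_of_nonneg_left hkey ht
  linarith

lemma integral_sin_sq_ge {α β : ℝ} (h : α + 8 ≤ β) :
    (β - α) / 4 ≤ ∫ x in α..β, Real.sin x ^ 2 := by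
  rw [integral_sin_sq]
  nlinarith [sq_nonneg (Real.sin α + Real.cos α), sq_nonneg (Real.sin β - Real.cos β),
    Real.sin_sq_add_cos_sq α, Real.sin_sq_add_cos_sq β]

lemma continuousAt_g' (hm : 0 < m) (hr : 0 < r) : ContinuousAt (g' m θ t) r := by
  have c1 : ContinuousAt (fun s : ℝ => s ^ (2 * θ)) r :=
    Real.continuousAt_rpow_const r _ (Or.inl hr.ne')
  have c2 : ContinuousAt (fun s : ℝ => s ^ (2 * θ - 1)) r :=
    Real.continuousAt_rpow_const r _ (Or.inl hr.ne')
  have cden : ContinuousAt (fun s : ℝ => 1 + s ^ (2 * θ)) r := continuousAt_const.add c1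
  have clog : ContinuousAt (fun s : ℝ => Real.log (1 + s ^ (2 * θ))) r :=
    ContinuousAt.log cden (one_add_rpow_pos hr _).ne'
  have cD : ContinuousAt (D m θ) r := by
    unfold D
    exact ((continuous_pow 2).continuousAt).add (continuousAt_const.mul clog)
  have csq : ContinuousAt (fun s => Real.sqrt (D m θ s)) r :=
    Real.continuous_sqrt.continuousAt.comp cD
  have cD' : ContinuousAt (D' m θ) r := by
    unfold D'
    exact (continuousAt_const.mul continuousAt_id).add
      (continuousAt_const.mul ((continuousAt_const.mul c2).div cden (one_add_rpow_pos hr _).ne'))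
  have hden : (2 : ℝ) * Real.sqrt (D m θ r) ≠ 0 :=
    mul_ne_zero two_ne_zero (Real.sqrt_pos.2 (D_pos hm hr)).ne'
  unfold g'
  exact continuousAt_const.mul (cD'.mul (continuousAt_const.div (continuousAt_const.mul csq) hden))

lemma continuousAt_g (hm : 0 < m) (hr : 0 < r) : ContinuousAt (g m θ t) r :=
  (hasDerivAt_g (t := t) hm hr).continuousAt

set_option maxHeartbeats 1000000 in
lemma key_osc (hm : 0 < m) (hθ1 : 0 < θ) (hθ2 : θ ≤ 1) {t a U : ℝ} (ht : 0 ≤ t)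
    (ha : 0 < a) (hb1 : 2 * a ≤ 1) (hU : 0 < U)
    (hgU : ∀ r ∈ Set.Icc a (2 * a), g' m θ t r ≤ U)
    (hgap : 8 ≤ g m θ t (2 * a) - g m θ t a) :
    (g m θ t (2 * a) - g m θ t a) / (4 * U) ≤
      ∫ r in a..(2 * a), Real.sin (g m θ t r) ^ 2 := by
  have hab : a ≤ 2 * a := by linarith
  have hIcc : Set.uIcc a (2 * a) = Set.Icc a (2 * a) := Set.uIcc_of_le hab
  have hposIcc : ∀ x ∈ Set.Icc a (2 * a), 0 < x := fun x hx => lt_of_lt_of_le ha hx.1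
  have hderiv : ∀ x ∈ Set.uIcc a (2 * a), HasDerivAt (g m θ t) (g' m θ t x) x := by
    intro x hx; rw [hIcc] at hx; exact hasDerivAt_g hm (hposIcc x hx)
  have hcont' : ContinuousOn (g' m θ t) (Set.uIcc a (2 * a)) := by
    rw [hIcc]; exact fun x hx => (continuousAt_g' hm (hposIcc x hx)).continuousWithinAt
  have hsub : (∫ r in a..(2 * a), g' m θ t r • ((fun u => Real.sin u ^ 2) ∘ (g m θ t)) r)
      = ∫ u in (g m θ t a)..(g m θ t (2 * a)), Real.sin u ^ 2 :=
    intervalIntegral.integral_comp_smul_deriv hderiv hcont' (Real.continuous_sin.pow 2)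
  have hcontg : ContinuousOn (fun r => Real.sin (g m θ t r) ^ 2) (Set.uIcc a (2 * a)) := by
    rw [hIcc]
    intro x hx
    exact ((Real.continuous_sin.continuousAt.comp
      (continuousAt_g (t := t) hm (hposIcc x hx))).pow 2).continuousWithinAt
  have hint1 : IntervalIntegrable (fun r => Real.sin (g m θ t r) ^ 2) volume a (2 * a) :=
    hcontg.intervalIntegrable
  have hint2 : IntervalIntegrable
      (fun r => (1 / U) * (g' m θ t r * Real.sin (g m θ t r) ^ 2)) volume a (2 * a) :=
    (continuousOn_const.mul (hcont'.mul hcontg)).intervalIntegrable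
  have hmono : (∫ r in a..(2 * a), (1 / U) * (g' m θ t r * Real.sin (g m θ t r) ^ 2))
      ≤ ∫ r in a..(2 * a), Real.sin (g m θ t r) ^ 2 := by
    apply intervalIntegral.integral_mono_on hab hint2 hint1
    intro x hx
    have h1 := hgU x hx
    have h2 : (0 : ℝ) ≤ Real.sin (g m θ t x) ^ 2 := sq_nonneg _
    have h4 : g' m θ t x * Real.sin (g m θ t x) ^ 2 ≤ U * Real.sin (g m θ t x) ^ 2 :=
      mul_le_mul_of_nonneg_right h1 h2
    calc (1 / U) * (g' m θ t x * Real.sin (g m θ t x) ^ 2)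
        ≤ (1 / U) * (U * Real.sin (g m θ t x) ^ 2) :=
          mul_le_mul_of_nonneg_left h4 (by positivity)
      _ = Real.sin (g m θ t x) ^ 2 := by field_simp
  have hintval : (∫ r in a..(2 * a), (1 / U) * (g' m θ t r * Real.sin (g m θ t r) ^ 2))
      = (1 / U) * ∫ u in (g m θ t a)..(g m θ t (2 * a)), Real.sin u ^ 2 := by
    rw [intervalIntegral.integral_const_mul, ← hsub]
    simp only [Function.comp_def, smul_eq_mul]
  have hsin := integral_sin_sq_ge (show g m θ t a + 8 ≤ g m θ t (2 * a) by linarith)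
  calc (g m θ t (2 * a) - g m θ t a) / (4 * U)
      = (1 / U) * ((g m θ t (2 * a) - g m θ t a) / 4) := by ring
    _ ≤ (1 / U) * ∫ u in (g m θ t a)..(g m θ t (2 * a)), Real.sin u ^ 2 :=
        mul_le_mul_of_nonneg_left hsin (by positivity)
    _ = ∫ r in a..(2 * a), (1 / U) * (g' m θ t r * Real.sin (g m θ t r) ^ 2) := hintval.symm
    _ ≤ ∫ r in a..(2 * a), Real.sin (g m θ t r) ^ 2 := hmono

lemma continuousAt_D (hr : 0 < r) : ContinuousAt (D m θ) r := by
  have c1 : ContinuousAt (fun s : ℝ => s ^ (2 * θ)) r :=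
    Real.continuousAt_rpow_const r _ (Or.inl hr.ne')
  have cden : ContinuousAt (fun s : ℝ => 1 + s ^ (2 * θ)) r := continuousAt_const.add c1
  have clog : ContinuousAt (fun s : ℝ => Real.log (1 + s ^ (2 * θ))) r :=
    ContinuousAt.log cden (one_add_rpow_pos hr _).ne'
  unfold D
  exact ((continuous_pow 2).continuousAt).add (continuousAt_const.mul clog)

lemma continuousAt_sqrtD (hr : 0 < r) : ContinuousAt (fun s => Real.sqrt (D m θ s)) r :=
  Real.continuous_sqrt.continuousAt.comp (continuousAt_D hr)

lemma continuousAt_phi (hm : 0 < m) {P₁ : ℝ} (hr : 0 < r) :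
    ContinuousAt (phi m θ P₁ t) r := by
  have hphi : phi m θ P₁ t = fun y =>
      P₁ * Real.exp (-(y ^ 2) * t / 2) * Real.sin (g m θ t y) / Real.sqrt (D m θ y) := rfl
  rw [hphi]
  have cin : Continuous fun y : ℝ => -(y ^ 2) * t / 2 := by continuity
  have cE : ContinuousAt (fun y : ℝ => Real.exp (-(y ^ 2) * t / 2)) r :=
    Real.continuous_exp.continuousAt.comp cin.continuousAt
  have csin : ContinuousAt (fun y => Real.sin (g m θ t y)) r :=
    Real.continuous_sin.continuousAt.comp (continuousAt_g hm hr)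
  exact ((continuousAt_const.mul cE).mul csin).div (continuousAt_sqrtD hr)
    (Real.sqrt_pos.2 (D_pos hm hr)).ne'

lemma phi_sq (hm : 0 < m) {P₁ : ℝ} (hr : 0 < r) :
    (phi m θ P₁ t r) ^ 2 =
      P₁ ^ 2 * Real.exp (-(r ^ 2) * t / 2) ^ 2 * Real.sin (g m θ t r) ^ 2 / D m θ r := by
  have h : phi m θ P₁ t r =
      P₁ * Real.exp (-(r ^ 2) * t / 2) * Real.sin (g m θ t r) / Real.sqrt (D m θ r) := rfl
  rw [h, div_pow, Real.sq_sqrt (D_nonneg (m := m) (θ := θ) hr)]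
  ring

lemma exp_sq (x : ℝ) : Real.exp x ^ 2 = Real.exp (2 * x) := by
  rw [sq, ← Real.exp_add]; ring_nf

lemma phi_sq_le (hm : 0 < m) {P₁ : ℝ} (ht : 0 ≤ t) (hr : 0 < r) :
    (phi m θ P₁ t r) ^ 2 ≤ P₁ ^ 2 * t ^ 2 * Real.exp (-t * r ^ 2) := by
  rw [phi_sq hm hr]
  have hD := D_pos (θ := θ) hm hr
  have hsin : Real.sin (g m θ t r) ^ 2 ≤ t ^ 2 * D m θ r := by
    have h1 : Real.sin (g m θ t r) ^ 2 ≤ (g m θ t r) ^ 2 := Real.sin_sq_le_sq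
    have h2 : (g m θ t r) ^ 2 = t ^ 2 * D m θ r := by
      unfold g
      rw [mul_pow, Real.sq_sqrt (D_nonneg (m := m) (θ := θ) hr)]
    linarith [h1.trans_eq h2]
  have hE : Real.exp (-(r ^ 2) * t / 2) ^ 2 = Real.exp (-t * r ^ 2) := by
    rw [exp_sq]; congr 1; ring
  rw [hE, div_le_iff₀ hD]
  have hEpos := Real.exp_pos (-t * r ^ 2)
  have h3 : P₁ ^ 2 * Real.exp (-t * r ^ 2) * Real.sin (g m θ t r) ^ 2 ≤
      P₁ ^ 2 * Real.exp (-t * r ^ 2) * (t ^ 2 * D m θ r) := by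
    apply mul_le_mul_of_nonneg_left hsin (by positivity)
  nlinarith

end Stmt15Aux

set_option maxHeartbeats 2000000 in
/-- Lemma 6.3: lower bound for the `L²`-norm of the profile. -/
theorem stmt15 (n : ℕ) (hn : 1 ≤ n) (m θ : ℝ) (hm : 0 < m) (hθ1 : 0 < θ) (hθ2 : θ ≤ 1)
    (hnθ : 0 < (n : ℝ) - 2 * θ) :
    ∃ C t₀ : ℝ, 0 < C ∧ 0 < t₀ ∧ ∀ t : ℝ, t₀ ≤ t → ∀ P₁ : ℝ,
      C * P₁ ^ 2 * t ^ (-((n : ℝ) - 2 * θ) / 2) ≤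
        ∫ ξ : E n, (phi m θ P₁ t ‖ξ‖) ^ 2 := by
  classical
  open Stmt15Aux in
  -- constants
  set cL : ℝ := m ^ 2 * θ / (8 * Real.sqrt (1 + m ^ 2)) with hcL_def
  have hcL : 0 < cL := by positivity
  set cU : ℝ := 2 * (1 + m ^ 2 * θ) / m with hcU_def
  have hcU : 0 < cU := by
    have : 0 < 1 + m ^ 2 * θ := by positivity
    positivity
  set V : ℝ := (volume (Metric.ball (0 : E n) 1)).toReal with hV_def
  have hV : 0 < V := by
    rw [hV_def]
    refine ENNReal.toReal_pos (Metric.measure_ball_pos volume _ one_pos).ne' ?_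
    exact (measure_ball_lt_top).ne
  have hn0 : (0 : ℝ) < n := by exact_mod_cast hn
  refine ⟨(n * V) * (Real.exp (-4) * cL / (16 * (1 + m ^ 2) * cU)), 16 + 64 / cL ^ 2,
    mul_pos (mul_pos hn0 hV) (by positivity), by positivity, ?_⟩
  intro t ht P₁
  have ht16 : (16 : ℝ) ≤ t := by
    have h64 : (0 : ℝ) ≤ 64 / cL ^ 2 := by positivity
    linarith
  have htpos : (0 : ℝ) < t := by linarith
  set a : ℝ := t ^ (-(1 / 2) : ℝ) with ha_def
  have ha : 0 < a := Real.rpow_pos_of_pos htpos _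
  have hab : a ≤ 2 * a := by linarith
  have ha2 : a ^ 2 = t⁻¹ := by
    rw [ha_def, Stmt15Aux.rpow_sq htpos]
    norm_num [Real.rpow_neg_one]
  have h16 : (16 : ℝ) ^ (-(1 / 2) : ℝ) = 1 / 4 := by
    rw [Real.rpow_neg (by norm_num), show (16 : ℝ) = (4 : ℝ) ^ (2 : ℕ) from by norm_num,
      ← Real.rpow_natCast (4 : ℝ) 2, ← Real.rpow_mul (by norm_num : (0 : ℝ) ≤ 4)]
    norm_num
  have ha14 : a ≤ 1 / 4 := by
    rw [ha_def, ← h16]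
    exact Real.rpow_le_rpow_of_nonpos (by norm_num) ht16 (by norm_num)
  have hb1 : 2 * a ≤ 1 := by linarith
  -- the gap of the phase
  have hgap0 : cL * (t * a ^ θ) ≤ g m θ t (2 * a) - g m θ t a :=
    g_gap hm hθ1 hθ2 htpos.le ha hb1
  have htsq : 8 / cL ≤ t ^ ((1 : ℝ) / 2) := by
    rw [show t ^ ((1 : ℝ) / 2) = Real.sqrt t from (Real.sqrt_eq_rpow t).symm]
    apply Real.le_sqrt' (by positivity) |>.2
    have h1 : (8 / cL) ^ 2 = 64 / cL ^ 2 := by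
      rw [div_pow]; norm_num
    have h2 : (0 : ℝ) ≤ 64 / cL ^ 2 := by positivity
    rw [h1]
    linarith
  have htaθ : t ^ ((1 : ℝ) / 2) ≤ t * a ^ θ := by
    have e1 : a ^ θ = t ^ ((-(1 / 2) : ℝ) * θ) := by
      rw [ha_def, ← Real.rpow_mul htpos.le]
    have e2 : t * a ^ θ = t ^ (1 + (-(1 / 2) : ℝ) * θ) := by
      rw [e1, Real.rpow_add htpos, Real.rpow_one]
    rw [e2]
    apply Real.rpow_le_rpow_of_exponent_le (by linarith)
    linarith
  have hgap8 : 8 ≤ g m θ t (2 * a) - g m θ t a := by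
    have h1 : 8 ≤ cL * (t * a ^ θ) := by
      have h2 : cL * (8 / cL) ≤ cL * (t ^ ((1 : ℝ) / 2)) :=
        mul_le_mul_of_nonneg_left htsq hcL.le
      have h3 : cL * (8 / cL) = 8 := by field_simp
      have h4 : cL * (t ^ ((1 : ℝ) / 2)) ≤ cL * (t * a ^ θ) :=
        mul_le_mul_of_nonneg_left htaθ hcL.le
      linarith
    linarith
  -- upper bound for the phase derivative
  set U : ℝ := cU * (t * a ^ (θ - 1)) with hU_def
  have hU : 0 < U := by
    have := Real.rpow_pos_of_pos ha (θ - 1)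
    positivity
  have hgU : ∀ r ∈ Set.Icc a (2 * a), g' m θ t r ≤ U := by
    intro x hx
    have hx0 : 0 < x := lt_of_lt_of_le ha hx.1
    have hx1 : x ≤ 1 := le_trans hx.2 hb1
    have h1 := g'_le (t := t) hm hθ1 hθ2 htpos.le hx0 hx1
    have h2 : x ^ (θ - 1) ≤ a ^ (θ - 1) :=
      Real.rpow_le_rpow_of_nonpos ha hx.1 (by linarith)
    calc g' m θ t x ≤ t * (2 * (1 + m ^ 2 * θ) / m) * x ^ (θ - 1) := h1
      _ ≤ t * (2 * (1 + m ^ 2 * θ) / m) * a ^ (θ - 1) := by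
          apply mul_le_mul_of_nonneg_left h2 (by positivity)
      _ = U := by rw [hU_def, hcU_def]; ring
  -- lower bound for the sine integral
  have hosc := key_osc hm hθ1 hθ2 htpos.le ha hb1 hU hgU hgap8
  have hsin_ge : cL / (4 * cU) * a ≤ ∫ r in a..(2 * a), Real.sin (g m θ t r) ^ 2 := by
    have h1 : cL * (t * a ^ θ) / (4 * U) ≤ (g m θ t (2 * a) - g m θ t a) / (4 * U) :=
      (div_le_div_iff_of_pos_right (by positivity)).2 hgap0
    have h2 : cL * (t * a ^ θ) / (4 * U) = cL / (4 * cU) * a := by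
      have e1 : a ^ θ = a ^ (θ - 1) * a := by
        rw [← Real.rpow_add_one ha.ne' (θ - 1)]
        norm_num
      have haθ1 : a ^ (θ - 1) ≠ 0 := (Real.rpow_pos_of_pos ha _).ne'
      rw [hU_def, e1]
      field_simp
    linarith [h1.trans hosc]
  -- pointwise lower bound on the annulus
  set Kc : ℝ := P₁ ^ 2 * Real.exp (-4) * a ^ (n - 1) / ((1 + m ^ 2) * (2 * a) ^ (2 * θ))
    with hKc_def
  have hKc0 : 0 ≤ Kc := by positivity
  have hpt : ∀ x ∈ Set.Icc a (2 * a),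
      Kc * Real.sin (g m θ t x) ^ 2 ≤ x ^ (n - 1) * (phi m θ P₁ t x) ^ 2 := by
    intro x hx
    have hx0 : 0 < x := lt_of_lt_of_le ha hx.1
    have hx1 : x ≤ 1 := le_trans hx.2 hb1
    have hDpos := D_pos (θ := θ) hm hx0
    have hE : Real.exp (-(x ^ 2) * t / 2) ^ 2 = Real.exp (-(x ^ 2 * t)) := by
      rw [exp_sq]; congr 1; ring
    have hexp : Real.exp (-4 : ℝ) ≤ Real.exp (-(x ^ 2 * t)) := by
      apply Real.exp_le_exp.2
      have hx2 : x ^ 2 ≤ (2 * a) ^ 2 := by nlinarith [hx.2, hx0.le]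
      have h4a : (2 * a) ^ 2 * t = 4 := by
        rw [mul_pow, ha2]
        field_simp
        norm_num
      nlinarith [htpos]
    have hxp : a ^ (n - 1) ≤ x ^ (n - 1) := pow_le_pow_left₀ ha.le hx.1 _
    have hDle : D m θ x ≤ (1 + m ^ 2) * (2 * a) ^ (2 * θ) := by
      have h1 := D_le (m := m) hθ2 hx0 hx1
      have h2 : x ^ (2 * θ) ≤ (2 * a) ^ (2 * θ) :=
        Real.rpow_le_rpow hx0.le hx.2 (by linarith)
      nlinarith [sq_nonneg m]
    have hnum : P₁ ^ 2 * Real.exp (-4) * a ^ (n - 1) * Real.sin (g m θ t x) ^ 2 ≤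
        x ^ (n - 1) * (P₁ ^ 2 * Real.exp (-(x ^ 2 * t)) * Real.sin (g m θ t x) ^ 2) := by
      have hprod : Real.exp (-4 : ℝ) * a ^ (n - 1) ≤
          Real.exp (-(x ^ 2 * t)) * x ^ (n - 1) :=
        mul_le_mul hexp hxp (pow_nonneg ha.le _) (Real.exp_pos _).le
      have h6 := mul_le_mul_of_nonneg_left hprod
        (mul_nonneg (sq_nonneg P₁) (sq_nonneg (Real.sin (g m θ t x))))
      linarith
    calc Kc * Real.sin (g m θ t x) ^ 2
        = P₁ ^ 2 * Real.exp (-4) * a ^ (n - 1) * Real.sin (g m θ t x) ^ 2 /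
            ((1 + m ^ 2) * (2 * a) ^ (2 * θ)) := by rw [hKc_def]; ring
      _ ≤ x ^ (n - 1) * (P₁ ^ 2 * Real.exp (-(x ^ 2 * t)) * Real.sin (g m θ t x) ^ 2) /
            D m θ x := div_le_div₀ (by positivity) hnum hDpos hDle
      _ = x ^ (n - 1) *
            (P₁ ^ 2 * Real.exp (-(x ^ 2 * t)) * Real.sin (g m θ t x) ^ 2 / D m θ x) := by
          ring
      _ = x ^ (n - 1) * (phi m θ P₁ t x) ^ 2 := by
          rw [phi_sq (θ := θ) (t := t) hm hx0, hE]
  -- integrability of the radial integrand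
  have hFnn : ∀ y ∈ Set.Ioi (0 : ℝ), 0 ≤ y ^ (n - 1) * (phi m θ P₁ t y) ^ 2 :=
    fun y hy => mul_nonneg (pow_nonneg (le_of_lt hy) _) (sq_nonneg _)
  have hFcont : ContinuousOn (fun y : ℝ => y ^ (n - 1) * (phi m θ P₁ t y) ^ 2)
      (Set.Ioi (0 : ℝ)) := by
    intro y hy
    exact ((continuous_pow _).continuousAt.mul
      ((continuousAt_phi (θ := θ) (t := t) hm hy).pow 2)).continuousWithinAt
  have hdom : IntegrableOn
      (fun y : ℝ => P₁ ^ 2 * t ^ 2 * (y ^ ((n : ℝ) - 1) * Real.exp (-t * y ^ 2)))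
      (Set.Ioi (0 : ℝ)) :=
    (integrableOn_rpow_mul_exp_neg_mul_sq htpos (by linarith : (-1 : ℝ) < (n : ℝ) - 1)).const_mul _
  have hF_int : IntegrableOn (fun y : ℝ => y ^ (n - 1) * (phi m θ P₁ t y) ^ 2)
      (Set.Ioi (0 : ℝ)) := by
    apply Integrable.mono' hdom (hFcont.aestronglyMeasurable measurableSet_Ioi)
    filter_upwards [ae_restrict_mem measurableSet_Ioi] with y hy
    have hy0 : (0 : ℝ) < y := hy
    have h1 := phi_sq_le (θ := θ) (P₁ := P₁) hm htpos.le hy0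
    rw [Real.norm_eq_abs, abs_of_nonneg (hFnn y hy)]
    have hyp : y ^ (n - 1 : ℕ) = y ^ ((n : ℝ) - 1) := by
      rw [← Real.rpow_natCast y (n - 1), Nat.cast_sub hn, Nat.cast_one]
    calc y ^ (n - 1) * (phi m θ P₁ t y) ^ 2
        ≤ y ^ (n - 1) * (P₁ ^ 2 * t ^ 2 * Real.exp (-t * y ^ 2)) :=
          mul_le_mul_of_nonneg_left h1 (pow_nonneg hy0.le _)
      _ = P₁ ^ 2 * t ^ 2 * (y ^ ((n : ℝ) - 1) * Real.exp (-t * y ^ 2)) := by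
          rw [← hyp]; ring
  -- chain of integral inequalities
  have hstep1 : (∫ y in Set.Ioc a (2 * a), y ^ (n - 1) * (phi m θ P₁ t y) ^ 2) ≤
      ∫ y in Set.Ioi (0 : ℝ), y ^ (n - 1) * (phi m θ P₁ t y) ^ 2 := by
    apply setIntegral_mono_set hF_int
    · exact (ae_restrict_iff' measurableSet_Ioi).2 (Filter.Eventually.of_forall hFnn)
    · exact Filter.Eventually.of_forall fun y hy => lt_trans ha hy.1
  have hstep2 : (∫ y in a..(2 * a), y ^ (n - 1) * (phi m θ P₁ t y) ^ 2) =
      ∫ y in Set.Ioc a (2 * a), y ^ (n - 1) * (phi m θ P₁ t y) ^ 2 :=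
    intervalIntegral.integral_of_le hab
  have hIcc_sub : Set.uIcc a (2 * a) ⊆ Set.Ioi (0 : ℝ) := by
    rw [Set.uIcc_of_le hab]
    exact fun y hy => lt_of_lt_of_le ha hy.1
  have hKsin_cont : ContinuousOn (fun y : ℝ => Kc * Real.sin (g m θ t y) ^ 2)
      (Set.uIcc a (2 * a)) := by
    intro x hx
    exact (continuousAt_const.mul ((Real.continuous_sin.continuousAt.comp
      (continuousAt_g (t := t) hm (hIcc_sub hx))).pow 2)).continuousWithinAt
  have hstep3 : Kc * (cL / (4 * cU) * a) ≤
      ∫ y in a..(2 * a), y ^ (n - 1) * (phi m θ P₁ t y) ^ 2 := by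
    have hmono : (∫ y in a..(2 * a), Kc * Real.sin (g m θ t y) ^ 2) ≤
        ∫ y in a..(2 * a), y ^ (n - 1) * (phi m θ P₁ t y) ^ 2 := by
      apply intervalIntegral.integral_mono_on hab hKsin_cont.intervalIntegrable
        ((hF_int.mono_set hIcc_sub).intervalIntegrable) hpt
    have hconst : (∫ y in a..(2 * a), Kc * Real.sin (g m θ t y) ^ 2) =
        Kc * ∫ y in a..(2 * a), Real.sin (g m θ t y) ^ 2 :=
      intervalIntegral.integral_const_mul _ _
    have h5 := mul_le_mul_of_nonneg_left hsin_ge hKc0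
    linarith
  -- the radial formula
  haveI : Nontrivial (E n) := Module.nontrivial_of_finrank_pos (R := ℝ)
    (by rw [finrank_euclideanSpace_fin]; omega)
  have hrad := integral_fun_norm_addHaar (volume : Measure (E n))
    (fun y => (phi m θ P₁ t y) ^ 2)
  simp only [finrank_euclideanSpace_fin, nsmul_eq_mul, smul_eq_mul] at hrad
  rw [hrad]
  -- final exponent computation
  have hpow : a ^ (n - 1 : ℕ) * a / a ^ (2 * θ) = t ^ (-((n : ℝ) - 2 * θ) / 2) := by
    rw [← Real.rpow_natCast a (n - 1), Nat.cast_sub hn, Nat.cast_one, ha_def,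
      ← Real.rpow_mul htpos.le, ← Real.rpow_mul htpos.le, ← Real.rpow_add htpos,
      ← Real.rpow_sub htpos]
    congr 1
    ring
  have hd4 : (2 * a) ^ (2 * θ) ≤ 4 * a ^ (2 * θ) := by
    rw [Real.mul_rpow (by norm_num) ha.le]
    have h2θ := two_rpow_le hθ2
    nlinarith [Real.rpow_pos_of_pos ha (2 * θ)]
  have hfinal : Real.exp (-4) * cL / (16 * (1 + m ^ 2) * cU) * P₁ ^ 2 *
      t ^ (-((n : ℝ) - 2 * θ) / 2) ≤ Kc * (cL / (4 * cU) * a) := by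
    have ha2θ := Real.rpow_pos_of_pos ha (2 * θ)
    have h2a2θ := Real.rpow_pos_of_pos (by linarith : (0 : ℝ) < 2 * a) (2 * θ)
    calc Real.exp (-4) * cL / (16 * (1 + m ^ 2) * cU) * P₁ ^ 2 *
        t ^ (-((n : ℝ) - 2 * θ) / 2)
        = Real.exp (-4) * cL * P₁ ^ 2 * (a ^ (n - 1 : ℕ) * a) /
            (16 * (1 + m ^ 2) * cU * a ^ (2 * θ)) := by
          rw [← hpow]; field_simp
      _ ≤ Real.exp (-4) * cL * P₁ ^ 2 * (a ^ (n - 1 : ℕ) * a) /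
            ((1 + m ^ 2) * (2 * a) ^ (2 * θ) * (4 * cU)) := by
          apply div_le_div_of_nonneg_left (by positivity) (by positivity)
          have h7 := mul_le_mul_of_nonneg_left hd4
            (by positivity : (0 : ℝ) ≤ (1 + m ^ 2) * (4 * cU))
          linarith
      _ = Kc * (cL / (4 * cU) * a) := by
          rw [hKc_def]; field_simp
  -- put everything together
  have hIoi : Kc * (cL / (4 * cU) * a) ≤
      ∫ y in Set.Ioi (0 : ℝ), y ^ (n - 1) * (phi m θ P₁ t y) ^ 2 := by
    calc Kc * (cL / (4 * cU) * a) ≤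
        ∫ y in a..(2 * a), y ^ (n - 1) * (phi m θ P₁ t y) ^ 2 := hstep3
      _ = ∫ y in Set.Ioc a (2 * a), y ^ (n - 1) * (phi m θ P₁ t y) ^ 2 := hstep2
      _ ≤ ∫ y in Set.Ioi (0 : ℝ), y ^ (n - 1) * (phi m θ P₁ t y) ^ 2 := hstep1
  have hnV : (0 : ℝ) ≤ (n : ℝ) * V := by positivity
  calc (n : ℝ) * V * (Real.exp (-4) * cL / (16 * (1 + m ^ 2) * cU)) * P₁ ^ 2 *
      t ^ (-((n : ℝ) - 2 * θ) / 2)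
      = (n : ℝ) * V * (Real.exp (-4) * cL / (16 * (1 + m ^ 2) * cU) * P₁ ^ 2 *
          t ^ (-((n : ℝ) - 2 * θ) / 2)) := by ring
    _ ≤ (n : ℝ) * V * (Kc * (cL / (4 * cU) * a)) :=
        mul_le_mul_of_nonneg_left hfinal hnV
    _ ≤ (n : ℝ) * V * ∫ y in Set.Ioi (0 : ℝ), y ^ (n - 1) * (phi m θ P₁ t y) ^ 2 :=
        mul_le_mul_of_nonneg_left hIoi hnV
    _ = (n : ℝ) * ((volume (Metric.ball (0 : E n) 1)).toReal *
          ∫ y in Set.Ioi (0 : ℝ), y ^ (n - 1) * (phi m θ P₁ t y) ^ 2) := by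
        rw [hV_def]; ring

end
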